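/- Let H be a Hermitian n×n complex matrix, J_1,…,J_M n×n complex matrices, λ_1,…,λ_M positive reals, and c_1,…,c_M complex numbers. Define H_ev = H + (i/2) Σ_{l=1}^M λ_l ( conj(c_l) J_l − c_l J_lᴴ ), which is Hermitian. Let S ⊆ ℂⁿ be a subspace such that every ψ ∈ S satisfies J_l ψ = c_l ψ for all l, and such that H_ev maps S into S. Then for every ψ₀ ∈ S and every t ∈ ℝ, exp(t𝓛)(ψ₀ψ₀ᴴ) = exp(−itH_ev) · ψ₀ψ₀ᴴ · exp(itH_ev). In particular, for unit ψ₀ ∈ S the purity Tr[ (exp(t𝓛)(ψ₀ψ₀ᴴ))² ] equals 1 for all t, so S is a decoherence-free subspace in the sense that all pure states from S evolve unitarily. -/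

import Mathlib

open Matrix BigOperators

attribute [local instance] Matrix.linftyOpNormedAddCommGroup Matrix.linftyOpNormedRing
  Matrix.linftyOpNormedAlgebra

/-- The decoherence superoperator `L_D[ρ] = Σ_l λ_l (J_l ρ J_lᴴ − ½ J_lᴴ J_l ρ − ½ ρ J_lᴴ J_l)`. -/
noncomputable def LD {M n : ℕ} (J : Fin M → Matrix (Fin n) (Fin n) ℂ)
    (lam : Fin M → ℝ) (ρ : Matrix (Fin n) (Fin n) ℂ) : Matrix (Fin n) (Fin n) ℂ :=
  ∑ l, (lam l : ℂ) • (J l * ρ * (J l)ᴴ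
    - (1 / 2 : ℂ) • ((J l)ᴴ * J l * ρ) - (1 / 2 : ℂ) • (ρ * ((J l)ᴴ * J l)))

/-- The decoherence operator `Γ = Σ_l λ_l J_lᴴ J_l`. -/
noncomputable def Gam {M n : ℕ} (J : Fin M → Matrix (Fin n) (Fin n) ℂ)
    (lam : Fin M → ℝ) : Matrix (Fin n) (Fin n) ℂ :=
  ∑ l, (lam l : ℂ) • ((J l)ᴴ * J l)

/-- The Liouvillian `𝓛[ρ] = −i[H,ρ] + L_D[ρ]` as a continuous linear endomorphism of the
space of `n×n` complex matrices (equipped with the `L∞`-operator norm). -/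
noncomputable def Liou {M n : ℕ} (H : Matrix (Fin n) (Fin n) ℂ)
    (J : Fin M → Matrix (Fin n) (Fin n) ℂ) (lam : Fin M → ℝ) :
    Matrix (Fin n) (Fin n) ℂ →L[ℂ] Matrix (Fin n) (Fin n) ℂ :=
  LinearMap.toContinuousLinearMap
    ((-Complex.I) • (LinearMap.mulLeft ℂ H - LinearMap.mulRight ℂ H)
      + ∑ l, (lam l : ℂ) •
          ((LinearMap.mulRight ℂ (J l)ᴴ).comp (LinearMap.mulLeft ℂ (J l))
            - (1 / 2 : ℂ) • LinearMap.mulLeft ℂ ((J l)ᴴ * J l)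
            - (1 / 2 : ℂ) • LinearMap.mulRight ℂ ((J l)ᴴ * J l)))

/-- The Liouvillian indeed sends `ρ` to `−i[H,ρ] + L_D[ρ]`. -/
theorem Liou_apply {M n : ℕ} (H : Matrix (Fin n) (Fin n) ℂ)
    (J : Fin M → Matrix (Fin n) (Fin n) ℂ) (lam : Fin M → ℝ)
    (ρ : Matrix (Fin n) (Fin n) ℂ) :
    Liou H J lam ρ = (-Complex.I) • (H * ρ - ρ * H) + LD J lam ρ := by
  simp [Liou, LD, LinearMap.mulLeft, LinearMap.mulRight]

/-- Port helper: the `L∞`-operator-norm ring structure on the space of continuous linear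
endomorphisms makes it a topological ring (no longer found automatically). -/
instance matCLM_isTopologicalRing (n : ℕ) :
    IsTopologicalRing (Matrix (Fin n) (Fin n) ℂ →L[ℂ] Matrix (Fin n) (Fin n) ℂ) :=
  @NonUnitalSeminormedRing.toIsTopologicalRing _ (@ContinuousLinearMap.toNormedRing ℂ
    (Matrix (Fin n) (Fin n) ℂ) _ _ _).toNonUnitalNormedRing.toNonUnitalSeminormedRing

/-- Port helper: the operator-norm normed ring / algebra structures on endomorphisms. -/
noncomputable def matCLM_normedRing (n : ℕ) :
    NormedRing (Matrix (Fin n) (Fin n) ℂ →L[ℂ] Matrix (Fin n) (Fin n) ℂ) :=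
  @ContinuousLinearMap.toNormedRing ℂ _ _ _ _

noncomputable def matCLM_normedAlgebra (n : ℕ) :
    letI := matCLM_normedRing n
    NormedAlgebra ℂ (Matrix (Fin n) (Fin n) ℂ →L[ℂ] Matrix (Fin n) (Fin n) ℂ) :=
  @ContinuousLinearMap.toNormedAlgebra ℂ (Matrix (Fin n) (Fin n) ℂ) _ _ _

noncomputable def matCLM_normedAlgebraRat (n : ℕ) :
    letI := matCLM_normedRing n
    NormedAlgebra ℚ (Matrix (Fin n) (Fin n) ℂ →L[ℂ] Matrix (Fin n) (Fin n) ℂ) :=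
  letI := matCLM_normedRing n
  letI := matCLM_normedAlgebra n
  NormedAlgebra.restrictScalars ℚ ℂ _

theorem matCLM_complete (n : ℕ) :
    @CompleteSpace (Matrix (Fin n) (Fin n) ℂ →L[ℂ] Matrix (Fin n) (Fin n) ℂ)
      (matCLM_normedRing n).toUniformSpace :=
  haveI : SequentialSpace (Matrix (Fin n) (Fin n) ℂ) :=
    inferInstanceAs (SequentialSpace (Fin n → Fin n → ℂ))
  @ContinuousLinearMap.instCompleteSpace ℂ ℂ _ _ (RingHom.id ℂ) (Matrix (Fin n) (Fin n) ℂ)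
    (Matrix (Fin n) (Fin n) ℂ) _ _ _ _ _ _ _ _ _ _ _ _

/-- `exp(t𝓛)`, the exponential of the Liouvillian as a linear map. -/
noncomputable def expL {M n : ℕ} (H : Matrix (Fin n) (Fin n) ℂ)
    (J : Fin M → Matrix (Fin n) (Fin n) ℂ) (lam : Fin M → ℝ) (t : ℝ) :
    Matrix (Fin n) (Fin n) ℂ →L[ℂ] Matrix (Fin n) (Fin n) ℂ :=
  NormedSpace.exp ((t : ℂ) • Liou H J lam)

/-- The matrix exponential `exp(−itH)`. -/
noncomputable def expM {n : ℕ} (H : Matrix (Fin n) (Fin n) ℂ) (t : ℝ) :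
    Matrix (Fin n) (Fin n) ℂ :=
  NormedSpace.exp ((-(Complex.I * (t : ℂ))) • H)
/-- `H_ev = H + (i/2) Σ_l λ_l (conj c_l · J_l − c_l · J_lᴴ)`. -/
noncomputable def Hev {M n : ℕ} (H : Matrix (Fin n) (Fin n) ℂ)
    (J : Fin M → Matrix (Fin n) (Fin n) ℂ) (lam : Fin M → ℝ) (c : Fin M → ℂ) :
    Matrix (Fin n) (Fin n) ℂ :=
  H + (Complex.I / 2) • ∑ l, (lam l : ℂ) • ((starRingEnd ℂ) (c l) • J l - c l • (J l)ᴴ)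



/- ## Auxiliary lemmas -/


lemma dfs_mul_vecMulVec {n : ℕ} (A : Matrix (Fin n) (Fin n) ℂ) (a b : Fin n → ℂ) :
    A * vecMulVec a b = vecMulVec (A *ᵥ a) b := by
  ext i j
  simp only [Matrix.mul_apply, vecMulVec_apply, Matrix.mulVec, dotProduct, Finset.sum_mul]
  exact Finset.sum_congr rfl fun k _ => by ring

lemma dfs_vecMulVec_mul {n : ℕ} (A : Matrix (Fin n) (Fin n) ℂ) (a b : Fin n → ℂ) :
    vecMulVec a b * A = vecMulVec a (b ᵥ* A) := by
  ext i j
  simp only [Matrix.mul_apply, vecMulVec_apply, Matrix.vecMul, dotProduct, Finset.mul_sum]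
  exact Finset.sum_congr rfl fun k _ => by ring

lemma dfs_smul_vecMulVec {n : ℕ} (r : ℂ) (a b : Fin n → ℂ) :
    vecMulVec (r • a) b = r • vecMulVec a b := by
  ext i j; simp [vecMulVec_apply, mul_assoc]

lemma dfs_vecMulVec_smul {n : ℕ} (r : ℂ) (a b : Fin n → ℂ) :
    vecMulVec a (r • b) = r • vecMulVec a b := by
  ext i j; simp [vecMulVec_apply]; ring

lemma dfs_vecMul_star {n : ℕ} (A : Matrix (Fin n) (Fin n) ℂ) (φ : Fin n → ℂ) :
    star φ ᵥ* A = star (Aᴴ *ᵥ φ) := by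
  rw [Matrix.star_mulVec, conjTranspose_conjTranspose]

lemma dfs_vecMulVec_mul_vecMulVec {n : ℕ} (a b c d : Fin n → ℂ) :
    vecMulVec a b * vecMulVec c d = (b ⬝ᵥ c) • vecMulVec a d := by
  ext i j
  simp only [Matrix.mul_apply, vecMulVec_apply, Matrix.smul_apply, dotProduct, smul_eq_mul,
    Finset.sum_mul]
  exact Finset.sum_congr rfl fun k _ => by ring

lemma dfs_trace_vecMulVec {n : ℕ} (a b : Fin n → ℂ) :
    Matrix.trace (vecMulVec a b) = b ⬝ᵥ a := by
  simp [Matrix.trace, vecMulVec_apply, dotProduct, Matrix.diag, mul_comm]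

lemma dfs_comb {n : ℕ} (X Y U V : Matrix (Fin n) (Fin n) ℂ) :
    (-Complex.I) • (X + (Complex.I/2) • U - (Y + (Complex.I/2) • V))
      = (-Complex.I) • (X - Y) + ((1:ℂ)/2) • (U - V) := by
  rw [smul_sub, smul_add, smul_add, smul_sub, smul_smul, smul_smul]
  match_scalars
  all_goals try ring
  all_goals (rw [Complex.I_sq]; ring)

lemma dfs_key {M n : ℕ} (H : Matrix (Fin n) (Fin n) ℂ)
    (J : Fin M → Matrix (Fin n) (Fin n) ℂ) (lam : Fin M → ℝ) (c : Fin M → ℂ)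
    (ρ : Matrix (Fin n) (Fin n) ℂ)
    (hJ : ∀ l, J l * ρ = c l • ρ)
    (hJ' : ∀ l, ρ * (J l)ᴴ = (starRingEnd ℂ) (c l) • ρ) :
    Liou H J lam ρ = (-Complex.I) • (Hev H J lam c * ρ - ρ * Hev H J lam c) := by
  have e1 : ∀ l, J l * ρ * (J l)ᴴ = (c l * (starRingEnd ℂ) (c l)) • ρ := fun l => by
    rw [hJ l, Matrix.smul_mul, hJ' l, smul_smul]
  have e2 : ∀ l, (J l)ᴴ * J l * ρ = c l • ((J l)ᴴ * ρ) := fun l => by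
    rw [mul_assoc, hJ l, Matrix.mul_smul]
  have e3 : ∀ l, ρ * ((J l)ᴴ * J l) = (starRingEnd ℂ) (c l) • (ρ * J l) := fun l => by
    rw [← mul_assoc, hJ' l, Matrix.smul_mul]
  have hL : ∀ l, ((lam l : ℂ) • ((starRingEnd ℂ) (c l) • J l - c l • (J l)ᴴ)) * ρ
      = (lam l : ℂ) • (((starRingEnd ℂ) (c l) * c l) • ρ - c l • ((J l)ᴴ * ρ)) := fun l => by
    rw [Matrix.smul_mul, Matrix.sub_mul, Matrix.smul_mul, Matrix.smul_mul, hJ l, smul_smul]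
  have hR : ∀ l, ρ * ((lam l : ℂ) • ((starRingEnd ℂ) (c l) • J l - c l • (J l)ᴴ))
      = (lam l : ℂ) • ((starRingEnd ℂ) (c l) • (ρ * J l) - (c l * (starRingEnd ℂ) (c l)) • ρ) := fun l => by
    rw [Matrix.mul_smul, Matrix.mul_sub, Matrix.mul_smul, Matrix.mul_smul, hJ' l, smul_smul]
  rw [Liou_apply, LD, Hev, Matrix.add_mul, Matrix.mul_add, Matrix.smul_mul, Matrix.mul_smul,
    Finset.sum_mul, Finset.mul_sum]
  simp only [e1, e2, e3, hL, hR]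
  rw [dfs_comb]
  congr 1
  rw [← Finset.sum_sub_distrib, Finset.smul_sum]
  refine Finset.sum_congr rfl fun l _ => ?_
  module

lemma dfs_hev_herm {M n : ℕ} (H : Matrix (Fin n) (Fin n) ℂ) (hH : H.IsHermitian)
    (J : Fin M → Matrix (Fin n) (Fin n) ℂ) (lam : Fin M → ℝ) (c : Fin M → ℂ) :
    (Hev H J lam c).IsHermitian := by
  have hsum : (∑ l, (lam l : ℂ) • ((starRingEnd ℂ) (c l) • J l - c l • (J l)ᴴ))ᴴ
      = -∑ l, (lam l : ℂ) • ((starRingEnd ℂ) (c l) • J l - c l • (J l)ᴴ) := by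
    rw [conjTranspose_sum, ← Finset.sum_neg_distrib]
    refine Finset.sum_congr rfl fun l _ => ?_
    rw [conjTranspose_smul, conjTranspose_sub, conjTranspose_smul, conjTranspose_smul,
      conjTranspose_conjTranspose]
    simp only [Complex.star_def, Complex.conj_ofReal, Complex.conj_conj]
    module
  show (Hev H J lam c)ᴴ = Hev H J lam c
  rw [Hev, conjTranspose_add, conjTranspose_smul, hsum, hH.eq]
  congr 1
  rw [smul_neg, ← neg_smul]
  congr 1
  · simp [Complex.star_def, map_div₀, Complex.conj_I]
    ring

noncomputable def dfsL {n : ℕ} (A : Matrix (Fin n) (Fin n) ℂ) :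
    Matrix (Fin n) (Fin n) ℂ →L[ℂ] Matrix (Fin n) (Fin n) ℂ :=
  LinearMap.toContinuousLinearMap (LinearMap.mulLeft ℂ A)

noncomputable def dfsR {n : ℕ} (A : Matrix (Fin n) (Fin n) ℂ) :
    Matrix (Fin n) (Fin n) ℂ →L[ℂ] Matrix (Fin n) (Fin n) ℂ :=
  LinearMap.toContinuousLinearMap (LinearMap.mulRight ℂ A)

@[simp] lemma dfsL_apply {n : ℕ} (A ρ : Matrix (Fin n) (Fin n) ℂ) : dfsL A ρ = A * ρ := rfl
@[simp] lemma dfsR_apply {n : ℕ} (A ρ : Matrix (Fin n) (Fin n) ℂ) : dfsR A ρ = ρ * A := rfl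

noncomputable def dfsLlin {n : ℕ} : Matrix (Fin n) (Fin n) ℂ →ₗ[ℂ]
    (Matrix (Fin n) (Fin n) ℂ →L[ℂ] Matrix (Fin n) (Fin n) ℂ) where
  toFun := dfsL
  map_add' A B := by ext1 ρ; simp [Matrix.add_mul]
  map_smul' r A := by ext1 ρ; simp [Matrix.smul_mul]

noncomputable def dfsRlin {n : ℕ} : Matrix (Fin n) (Fin n) ℂ →ₗ[ℂ]
    (Matrix (Fin n) (Fin n) ℂ →L[ℂ] Matrix (Fin n) (Fin n) ℂ) where
  toFun := dfsR
  map_add' A B := by ext1 ρ; simp [Matrix.mul_add]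
  map_smul' r A := by ext1 ρ; simp [Matrix.mul_smul]

lemma dfsL_continuous {n : ℕ} : Continuous (dfsL (n := n)) :=
  dfsLlin.continuous_of_finiteDimensional

lemma dfsR_continuous {n : ℕ} : Continuous (dfsR (n := n)) :=
  dfsRlin.continuous_of_finiteDimensional

noncomputable def dfsLhom {n : ℕ} : Matrix (Fin n) (Fin n) ℂ →ₐ[ℂ]
    (Matrix (Fin n) (Fin n) ℂ →L[ℂ] Matrix (Fin n) (Fin n) ℂ) where
  toFun := dfsL
  map_one' := by ext1 ρ; simp
  map_mul' A B := by ext1 ρ; simp [ContinuousLinearMap.mul_apply, mul_assoc]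
  map_zero' := by ext1 ρ; simp
  map_add' A B := by ext1 ρ; simp [Matrix.add_mul]
  commutes' z := by ext1 ρ; simp [Algebra.algebraMap_eq_smul_one, Matrix.smul_mul]

noncomputable def dfsRhom {n : ℕ} : (Matrix (Fin n) (Fin n) ℂ)ᵐᵒᵖ →ₐ[ℂ]
    (Matrix (Fin n) (Fin n) ℂ →L[ℂ] Matrix (Fin n) (Fin n) ℂ) where
  toFun B := dfsR B.unop
  map_one' := by ext1 ρ; simp
  map_mul' A B := by ext1 ρ; simp [ContinuousLinearMap.mul_apply, mul_assoc]
  map_zero' := by ext1 ρ; simp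
  map_add' A B := by ext1 ρ; simp [Matrix.mul_add]
  commutes' z := by ext1 ρ; simp [Algebra.algebraMap_eq_smul_one, Matrix.mul_smul]

lemma dfs_exp_L {n : ℕ} (A : Matrix (Fin n) (Fin n) ℂ) :
    NormedSpace.exp (dfsL A) = dfsL (NormedSpace.exp A) := by
  letI := matCLM_normedRing n
  letI := matCLM_normedAlgebra n
  letI := matCLM_normedAlgebraRat n
  letI := matCLM_complete n
  have h := NormedSpace.map_exp
    ((dfsLhom (n := n)).toRingHom :
      Matrix (Fin n) (Fin n) ℂ →+* (Matrix (Fin n) (Fin n) ℂ →L[ℂ] Matrix (Fin n) (Fin n) ℂ))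
    dfsL_continuous A
  exact h.symm

lemma dfs_exp_R {n : ℕ} (A : Matrix (Fin n) (Fin n) ℂ) :
    NormedSpace.exp (dfsR A) = dfsR (NormedSpace.exp A) := by
  letI := matCLM_normedRing n
  letI := matCLM_normedAlgebra n
  letI := matCLM_normedAlgebraRat n
  letI := matCLM_complete n
  have h1 := NormedSpace.map_exp
      ((dfsRhom (n := n)).toRingHom :
        (Matrix (Fin n) (Fin n) ℂ)ᵐᵒᵖ →+* (Matrix (Fin n) (Fin n) ℂ →L[ℂ] Matrix (Fin n) (Fin n) ℂ))
      (dfsR_continuous.comp MulOpposite.continuous_unop) (MulOpposite.op A)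
  have h2 : NormedSpace.exp (MulOpposite.op A) = MulOpposite.op (NormedSpace.exp A) :=
    NormedSpace.exp_op A
  exact h1.symm.trans (congrArg (dfsRhom (n := n)).toRingHom h2)
lemma dfs_exp_apply_eq {n : ℕ}
    (L D : Matrix (Fin n) (Fin n) ℂ →L[ℂ] Matrix (Fin n) (Fin n) ℂ)
    (ρ : Matrix (Fin n) (Fin n) ℂ)
    (h : ∀ k : ℕ, (L ^ k) ρ = (D ^ k) ρ) :
    NormedSpace.exp L ρ = NormedSpace.exp D ρ := by
  letI := matCLM_normedRing n
  letI := matCLM_normedAlgebra n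
  letI := matCLM_normedAlgebraRat n
  letI := matCLM_complete n
  have hs : Summable fun k : ℕ => ((Nat.factorial k : ℂ))⁻¹ • L ^ k := NormedSpace.expSeries_summable' (𝕂 := ℂ) L
  have hs' : Summable fun k : ℕ => ((Nat.factorial k : ℂ))⁻¹ • D ^ k := NormedSpace.expSeries_summable' (𝕂 := ℂ) D
  have e1 := (ContinuousLinearMap.apply ℂ (Matrix (Fin n) (Fin n) ℂ) ρ).map_tsum hs
  have e2 := (ContinuousLinearMap.apply ℂ (Matrix (Fin n) (Fin n) ℂ) ρ).map_tsum hs'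
  rw [NormedSpace.exp_eq_tsum ℂ]
  simp only [ContinuousLinearMap.apply_apply] at e1 e2
  refine (e1.trans ?_).trans e2.symm
  exact tsum_congr fun k => congrArg (fun x => ((Nat.factorial k : ℂ))⁻¹ • x) (h k)

lemma dfs_commute {n : ℕ} (B C : Matrix (Fin n) (Fin n) ℂ) :
    Commute (dfsL B) (dfsR C) := by
  apply ContinuousLinearMap.ext
  intro ρ
  simp [ContinuousLinearMap.mul_apply, mul_assoc]

lemma dfs_exp_LR {n : ℕ} (B C : Matrix (Fin n) (Fin n) ℂ) (ρ : Matrix (Fin n) (Fin n) ℂ) :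
    NormedSpace.exp (dfsL B + dfsR C) ρ
      = NormedSpace.exp B * ρ * NormedSpace.exp C := by
  have h : NormedSpace.exp (dfsL B + dfsR C) = NormedSpace.exp (dfsL B) * NormedSpace.exp (dfsR C) := by
    letI := matCLM_normedRing n
    letI := matCLM_normedAlgebra n
    letI := matCLM_normedAlgebraRat n
    letI := matCLM_complete n
    exact NormedSpace.exp_add_of_commute
      (𝔸 := Matrix (Fin n) (Fin n) ℂ →L[ℂ] Matrix (Fin n) (Fin n) ℂ) (dfs_commute B C)
  rw [h, dfs_exp_L, dfs_exp_R, ContinuousLinearMap.mul_apply, dfsR_apply, dfsL_apply, mul_assoc]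

/-- Theorem (general dynamically stable DFS, sufficiency): if every `ψ ∈ S` satisfies
`J_l ψ = c_l ψ` and `S` is invariant under the Hermitian matrix `H_ev`, then every state
from `S` evolves unitarily, `exp(t𝓛)(ψ₀ψ₀ᴴ) = exp(−itH_ev) ψ₀ψ₀ᴴ exp(itH_ev)`, and in
particular the purity of any unit `ψ₀ ∈ S` stays equal to `1`. -/
theorem stmt12 {M n : ℕ} (H : Matrix (Fin n) (Fin n) ℂ) (hH : H.IsHermitian)
    (J : Fin M → Matrix (Fin n) (Fin n) ℂ) (lam : Fin M → ℝ) (hlam : ∀ l, 0 < lam l)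
    (c : Fin M → ℂ)
    (S : Submodule ℂ (Fin n → ℂ))
    (heig : ∀ ψ ∈ S, ∀ l, (J l).mulVec ψ = c l • ψ)
    (hinv : ∀ ψ ∈ S, (Hev H J lam c).mulVec ψ ∈ S) :
    (Hev H J lam c).IsHermitian
    ∧ (∀ ψ₀ ∈ S, ∀ t : ℝ,
        expL H J lam t (vecMulVec ψ₀ (star ψ₀))
          = expM (Hev H J lam c) t * vecMulVec ψ₀ (star ψ₀) * expM (Hev H J lam c) (-t))
    ∧ ∀ ψ₀ ∈ S, star ψ₀ ⬝ᵥ ψ₀ = 1 → ∀ t : ℝ,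
        Matrix.trace (expL H J lam t (vecMulVec ψ₀ (star ψ₀))
          * expL H J lam t (vecMulVec ψ₀ (star ψ₀))) = 1 := by
  have hA : (Hev H J lam c).IsHermitian := dfs_hev_herm H hH J lam c
  set A : Matrix (Fin n) (Fin n) ℂ := Hev H J lam c with hAdef
  -- the subspace of matrices spanned by dyads from S
  set G : Set (Matrix (Fin n) (Fin n) ℂ) :=
    {m | ∃ ψ ∈ S, ∃ φ ∈ S, m = vecMulVec ψ (star φ)} with hG
  set W : Submodule ℂ (Matrix (Fin n) (Fin n) ℂ) := Submodule.span ℂ G with hW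
  -- the effective Hamiltonian commutator superoperator
  set D : Matrix (Fin n) (Fin n) ℂ →L[ℂ] Matrix (Fin n) (Fin n) ℂ :=
    LinearMap.toContinuousLinearMap
      ((-Complex.I) • (LinearMap.mulLeft ℂ A - LinearMap.mulRight ℂ A)) with hDdef
  have hD_apply : ∀ ρ, D ρ = (-Complex.I) • (A * ρ - ρ * A) := fun ρ => by
    simp [hDdef, LinearMap.mulLeft, LinearMap.mulRight]
  -- eigenrelations on W
  have hWeig : ∀ ρ ∈ W, (∀ l, J l * ρ = c l • ρ)
      ∧ (∀ l, ρ * (J l)ᴴ = (starRingEnd ℂ) (c l) • ρ) := by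
    intro ρ hρ
    induction hρ using Submodule.span_induction with
    | mem m hm =>
      obtain ⟨ψ, hψ, φ, hφ, rfl⟩ := hm
      constructor
      · intro l
        rw [dfs_mul_vecMulVec, heig ψ hψ l, dfs_smul_vecMulVec]
      · intro l
        rw [dfs_vecMulVec_mul, dfs_vecMul_star, conjTranspose_conjTranspose, heig φ hφ l,
          star_smul, dfs_vecMulVec_smul]
        rfl
    | zero => exact ⟨fun l => by simp, fun l => by simp⟩
    | add x y hx hy ihx ihy =>
      exact ⟨fun l => by rw [Matrix.mul_add, ihx.1 l, ihy.1 l, smul_add],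
        fun l => by rw [Matrix.add_mul, ihx.2 l, ihy.2 l, smul_add]⟩
    | smul a x hx ihx =>
      exact ⟨fun l => by rw [Matrix.mul_smul, ihx.1 l, smul_comm],
        fun l => by rw [Matrix.smul_mul, ihx.2 l, smul_comm]⟩
  -- W is invariant under D
  have hDW : ∀ ρ ∈ W, D ρ ∈ W := by
    intro ρ hρ
    induction hρ using Submodule.span_induction with
    | mem m hm =>
      obtain ⟨ψ, hψ, φ, hφ, rfl⟩ := hm
      rw [hD_apply]
      apply Submodule.smul_mem
      apply Submodule.sub_mem
      · rw [dfs_mul_vecMulVec]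
        exact Submodule.subset_span ⟨A *ᵥ ψ, hinv ψ hψ, φ, hφ, rfl⟩
      · rw [dfs_vecMulVec_mul, dfs_vecMul_star, hA.eq]
        exact Submodule.subset_span ⟨ψ, hψ, A *ᵥ φ, hinv φ hφ, rfl⟩
    | zero => simpa using Submodule.zero_mem W
    | add x y hx hy ihx ihy => rw [map_add]; exact Submodule.add_mem W ihx ihy
    | smul a x hx ihx => rw [ContinuousLinearMap.map_smul]; exact Submodule.smul_mem W a ihx
  -- Liouvillian agrees with D on W
  have hLD : ∀ ρ ∈ W, Liou H J lam ρ = D ρ := by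
    intro ρ hρ
    obtain ⟨h1, h2⟩ := hWeig ρ hρ
    rw [dfs_key H J lam c ρ h1 h2, hD_apply]
  -- powers agree on W
  have hpow : ∀ (z : ℂ), ∀ ρ₀ ∈ W, ∀ k : ℕ,
      ((z • Liou H J lam) ^ k) ρ₀ = ((z • D) ^ k) ρ₀ ∧ ((z • D) ^ k) ρ₀ ∈ W := by
    intro z ρ₀ h₀ k
    induction k with
    | zero => exact ⟨rfl, by simpa using h₀⟩
    | succ k ih =>
      have h1 : ((z • D) ^ (k + 1)) ρ₀ = z • D (((z • D) ^ k) ρ₀) := by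
        rw [pow_succ', ContinuousLinearMap.mul_apply, ContinuousLinearMap.smul_apply]
      have h2 : ((z • Liou H J lam) ^ (k + 1)) ρ₀
          = z • (Liou H J lam) (((z • Liou H J lam) ^ k) ρ₀) := by
        rw [pow_succ', ContinuousLinearMap.mul_apply, ContinuousLinearMap.smul_apply]
      refine ⟨?_, ?_⟩
      · rw [h2, h1, ih.1, hLD _ ih.2]
      · rw [h1]
        exact Submodule.smul_mem W z (hDW _ ih.2)
  -- the main evolution statement
  have main2 : ∀ ψ₀ ∈ S, ∀ t : ℝ,
      expL H J lam t (vecMulVec ψ₀ (star ψ₀))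
        = expM A t * vecMulVec ψ₀ (star ψ₀) * expM A (-t) := by
    intro ψ₀ hψ₀ t
    have hρW : vecMulVec ψ₀ (star ψ₀) ∈ W := by
      apply Submodule.subset_span
      exact ⟨ψ₀, hψ₀, ψ₀, hψ₀, rfl⟩
    have step1 : expL H J lam t (vecMulVec ψ₀ (star ψ₀))
        = NormedSpace.exp ((t : ℂ) • D) (vecMulVec ψ₀ (star ψ₀)) := by
      rw [expL]
      exact dfs_exp_apply_eq _ _ _ fun k => (hpow (t : ℂ) _ hρW k).1
    have hsplit : (t : ℂ) • D
        = dfsL ((-(Complex.I * (t : ℂ))) • A) + dfsR ((Complex.I * (t : ℂ)) • A) := by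
      apply ContinuousLinearMap.ext
      intro ρ
      rw [ContinuousLinearMap.add_apply, ContinuousLinearMap.smul_apply, hD_apply,
        dfsL_apply, dfsR_apply, Matrix.smul_mul, Matrix.mul_smul]
      module
    have hcast : (-(Complex.I * ((-t : ℝ) : ℂ))) = Complex.I * (t : ℂ) := by
      push_cast; ring
    rw [step1, hsplit, dfs_exp_LR, expM, expM, hcast]
  refine ⟨hA, main2, ?_⟩
  -- purity
  intro ψ₀ hψ₀ hunit t
  rw [main2 ψ₀ hψ₀ t]
  have hVU : expM A (-t) * expM A t = 1 := by
    rw [expM, expM]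
    have hc : Commute ((-(Complex.I * ((-t : ℝ) : ℂ))) • A) ((-(Complex.I * (t : ℂ))) • A) :=
      ((Commute.refl A).smul_left _).smul_right _
    rw [← Matrix.exp_add_of_commute _ _ hc, ← add_smul]
    have hz : (-(Complex.I * ((-t : ℝ) : ℂ))) + (-(Complex.I * (t : ℂ))) = 0 := by
      push_cast; ring
    rw [hz, zero_smul, NormedSpace.exp_zero]
  have hρρ : vecMulVec ψ₀ (star ψ₀) * vecMulVec ψ₀ (star ψ₀) = vecMulVec ψ₀ (star ψ₀) := by
    rw [dfs_vecMulVec_mul_vecMulVec, hunit, one_smul]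
  have hsq : expM A t * vecMulVec ψ₀ (star ψ₀) * expM A (-t)
        * (expM A t * vecMulVec ψ₀ (star ψ₀) * expM A (-t))
      = expM A t * vecMulVec ψ₀ (star ψ₀) * expM A (-t) := by
    have h1 : expM A t * vecMulVec ψ₀ (star ψ₀) * expM A (-t)
          * (expM A t * vecMulVec ψ₀ (star ψ₀) * expM A (-t))
        = expM A t * (vecMulVec ψ₀ (star ψ₀) * ((expM A (-t) * expM A t)
            * vecMulVec ψ₀ (star ψ₀))) * expM A (-t) := by
      noncomm_ring
    rw [h1, hVU, one_mul, hρρ]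
  rw [hsq, Matrix.trace_mul_comm, ← mul_assoc, hVU, one_mul,
    dfs_trace_vecMulVec, hunit]
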